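/- Let X be a Banach space with a subsymmetric Schauder basis. Then B(X) admits a bounded family Q of commuting, pairwise almost orthogonal idempotents such that |Q| = 2^ℵ₀ and the range of each P ∈ Q is isomorphic to X. -/

import Mathlib

set_option linter.unusedSectionVars false

open Set Finset

lemma aux_partial_bound {ι E : Type*} [NormedAddCommGroup E] {g : ι → E} {a : E}
    (hg : HasSum g a) : ∃ M : ℝ, ∀ s : Finset ι, ‖∑ n ∈ s, g n‖ ≤ M := by
  classical
  have h : ∀ᶠ s in Filter.atTop, ‖(∑ n ∈ s, g n) - a‖ < 1 := by
    have := Metric.tendsto_nhds.mp hg 1 one_pos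
    simpa [dist_eq_norm] using this
  obtain ⟨s₀, hs₀⟩ := Filter.eventually_atTop.mp h
  refine ⟨‖a‖ + 1 + ∑ n ∈ s₀, ‖g n‖, fun s => ?_⟩
  have h1 : ∑ n ∈ s, g n = (∑ n ∈ s ∪ s₀, g n) - ∑ n ∈ s₀ \ s, g n := by
    have : ∑ n ∈ s ∪ s₀, g n = ∑ n ∈ s, g n + ∑ n ∈ s₀ \ s, g n := by
      rw [← Finset.sum_union Finset.disjoint_sdiff, Finset.union_sdiff_self_eq_union]
    rw [this]; abel
  rw [h1]
  have h2 : ‖∑ n ∈ s ∪ s₀, g n‖ ≤ ‖a‖ + 1 := by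
    have hlt := hs₀ (s ∪ s₀) Finset.subset_union_right
    have : ‖∑ n ∈ s ∪ s₀, g n‖ ≤ ‖(∑ n ∈ s ∪ s₀, g n) - a‖ + ‖a‖ := by
      calc ‖∑ n ∈ s ∪ s₀, g n‖ = ‖((∑ n ∈ s ∪ s₀, g n) - a) + a‖ := by rw [sub_add_cancel]
      _ ≤ _ := norm_add_le _ _
    linarith
  have h3 : ‖∑ n ∈ s₀ \ s, g n‖ ≤ ∑ n ∈ s₀, ‖g n‖ :=
    le_trans (norm_sum_le _ _) (Finset.sum_le_sum_of_subset_of_nonneg (Finset.sdiff_subset)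
      (fun _ _ _ => norm_nonneg _))
  calc ‖_ - _‖ ≤ ‖∑ n ∈ s ∪ s₀, g n‖ + ‖∑ n ∈ s₀ \ s, g n‖ := norm_sub_le _ _
  _ ≤ ‖a‖ + 1 + ∑ n ∈ s₀, ‖g n‖ := by linarith

lemma aux_uniform {X : Type*} [NormedAddCommGroup X] [NormedSpace ℂ X] [CompleteSpace X]
    (b : ℕ → X) (f : ℕ → StrongDual ℂ X)
    (hunc : ∀ x : X, HasSum (fun n => f n x • b n) x) :
    ∃ C₀ : ℝ, 0 ≤ C₀ ∧ ∀ (s : Finset ℕ) (x : X), ‖∑ n ∈ s, f n x • b n‖ ≤ C₀ * ‖x‖ := by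
  set g : Finset ℕ → X →L[ℂ] X := fun s => ∑ n ∈ s, (f n).smulRight (b n) with hg
  have hgapp : ∀ s x, g s x = ∑ n ∈ s, f n x • b n := by
    intro s x
    simp [hg, ContinuousLinearMap.sum_apply]
  have hpt : ∀ x : X, ∃ C, ∀ s : Finset ℕ, ‖g s x‖ ≤ C := by
    intro x
    obtain ⟨M, hM⟩ := aux_partial_bound (hunc x)
    exact ⟨M, fun s => by rw [hgapp]; exact hM s⟩
  obtain ⟨C, hC⟩ := banach_steinhaus hpt
  refine ⟨max C 0, le_max_right _ _, fun s x => ?_⟩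
  calc ‖∑ n ∈ s, f n x • b n‖ = ‖g s x‖ := by rw [hgapp]
  _ ≤ ‖g s‖ * ‖x‖ := (g s).le_opNorm x
  _ ≤ max C 0 * ‖x‖ := by
      apply mul_le_mul_of_nonneg_right (le_trans (hC s) (le_max_left _ _)) (norm_nonneg _)

lemma aux_tsum_norm_le {ι E : Type*} [NormedAddCommGroup E] {g : ι → E} (hg : Summable g)
    {M : ℝ} (h : ∀ s : Finset ι, ‖∑ n ∈ s, g n‖ ≤ M) : ‖∑' n, g n‖ ≤ M :=
  le_of_tendsto hg.hasSum.norm (Filter.Eventually.of_forall h)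

section Proj
variable {X : Type*} [NormedAddCommGroup X] [NormedSpace ℂ X] [CompleteSpace X]
  (b : ℕ → X) (f : ℕ → StrongDual ℂ X)

lemma summable_ind (hunc : ∀ x : X, HasSum (fun n => f n x • b n) x) (A : Set ℕ) (x : X) :
    Summable (A.indicator fun n => f n x • b n) :=
  (hunc x).summable.indicator A

variable (hunc : ∀ x : X, HasSum (fun n => f n x • b n) x)

noncomputable def projL (A : Set ℕ) : X →L[ℂ] X :=
  LinearMap.mkContinuousOfExistsBound
    { toFun := fun x => ∑' n, A.indicator (fun n => f n x • b n) n
      map_add' := by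
        intro x y
        rw [← Summable.tsum_add (summable_ind b f hunc A x) (summable_ind b f hunc A y)]
        apply tsum_congr; intro n
        by_cases hn : n ∈ A <;>
          simp [Set.indicator_of_mem, Set.indicator_of_notMem, hn, map_add, add_smul]
      map_smul' := by
        intro c x
        rw [RingHom.id_apply, ← tsum_const_smul'' c]
        apply tsum_congr; intro n
        by_cases hn : n ∈ A <;>
          simp [Set.indicator_of_mem, Set.indicator_of_notMem, hn, map_smul, smul_smul] }
    (by
      classical
      obtain ⟨C₀, h0, hC₀⟩ := aux_uniform b f hunc
      refine ⟨C₀, fun x => ?_⟩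
      apply aux_tsum_norm_le (summable_ind b f hunc A x)
      intro s
      rw [Finset.sum_indicator_eq_sum_filter]
      exact hC₀ _ x)

lemma projL_apply (A : Set ℕ) (x : X) :
    projL b f hunc A x = ∑' n, A.indicator (fun n => f n x • b n) n := rfl


lemma projL_coeff (hbiorth : ∀ m n, f m (b n) = if m = n then 1 else 0) (A : Set ℕ) (m : ℕ) (x : X) :
    f m (projL b f hunc A x) = A.indicator (fun n => f n x) m := by
  rw [projL_apply, ContinuousLinearMap.map_tsum _ (summable_ind b f hunc A x)]
  have key : ∀ n, f m (A.indicator (fun n => f n x • b n) n)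
      = if n = m then A.indicator (fun k => f k x) m else 0 := by
    intro n
    by_cases hn : n ∈ A
    · rw [Set.indicator_of_mem hn, map_smul, hbiorth m n]
      by_cases h : n = m
      · subst h; simp [Set.indicator_of_mem hn]
      · simp [h, Ne.symm h]
    · rw [Set.indicator_of_notMem hn]
      by_cases h : n = m
      · subst h; simp [Set.indicator_of_notMem hn]
      · simp [h]
  rw [tsum_congr key, tsum_ite_eq]

lemma projL_comp (hbiorth : ∀ m n, f m (b n) = if m = n then 1 else 0) (A B : Set ℕ) :
    (projL b f hunc A).comp (projL b f hunc B) = projL b f hunc (A ∩ B) := by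
  apply ContinuousLinearMap.ext; intro x
  simp only [ContinuousLinearMap.comp_apply]
  rw [projL_apply b f hunc A, projL_apply b f hunc (A ∩ B)]
  have hco : ∀ n, f n (projL b f hunc B x) = B.indicator (fun k => f k x) n :=
    fun n => projL_coeff b f hunc hbiorth B n x
  apply tsum_congr; intro n
  by_cases hn : n ∈ A
  · rw [Set.indicator_of_mem hn, hco]
    by_cases hn' : n ∈ B
    · rw [Set.indicator_of_mem hn', Set.indicator_of_mem (Set.mem_inter hn hn')]
    · rw [Set.indicator_of_notMem hn', Set.indicator_of_notMem
        (fun h : n ∈ A ∩ B => hn' h.2), zero_smul]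
  · rw [Set.indicator_of_notMem hn, Set.indicator_of_notMem (fun h : n ∈ A ∩ B => hn h.1)]

lemma projL_basis (hbiorth : ∀ m n, f m (b n) = if m = n then 1 else 0) (A : Set ℕ) (m : ℕ) :
    projL b f hunc A (b m) = A.indicator b m := by
  classical
  rw [projL_apply]
  have key : ∀ n, A.indicator (fun n => f n (b m) • b n) n
      = if n = m then A.indicator b m else 0 := by
    intro n
    by_cases hn : n ∈ A
    · rw [Set.indicator_of_mem hn, hbiorth n m]
      by_cases h : n = m
      · subst h; simp [Set.indicator_of_mem hn]
      · simp [h]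
    · rw [Set.indicator_of_notMem hn]
      by_cases h : n = m
      · subst h; simp [Set.indicator_of_notMem hn]
      · simp [h]
  rw [tsum_congr key, tsum_ite_eq]

lemma b_ne_zero (hbiorth : ∀ m n, f m (b n) = if m = n then 1 else 0) (m : ℕ) : b m ≠ 0 := by
  intro h
  have h2 := hbiorth m m
  rw [h, map_zero] at h2
  simp at h2

lemma projL_inj (hbiorth : ∀ m n, f m (b n) = if m = n then 1 else 0) {A B : Set ℕ}
    (h : projL b f hunc A = projL b f hunc B) : A = B := by
  ext m
  have h1 := projL_basis b f hunc hbiorth A m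
  have h2 := projL_basis b f hunc hbiorth B m
  rw [h, h2] at h1
  constructor
  · intro hm
    by_contra hm'
    rw [Set.indicator_of_notMem hm', Set.indicator_of_mem hm] at h1
    exact b_ne_zero b f hbiorth m h1.symm
  · intro hm
    by_contra hm'
    rw [Set.indicator_of_mem hm, Set.indicator_of_notMem hm'] at h1
    exact b_ne_zero b f hbiorth m h1

lemma projL_norm_le {C₀ : ℝ} (h0 : 0 ≤ C₀)
    (hC₀ : ∀ (s : Finset ℕ) (x : X), ‖∑ n ∈ s, f n x • b n‖ ≤ C₀ * ‖x‖) (A : Set ℕ) :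
    ‖projL b f hunc A‖ ≤ C₀ := by
  classical
  apply ContinuousLinearMap.opNorm_le_bound _ h0
  intro x
  rw [projL_apply]
  apply aux_tsum_norm_le (summable_ind b f hunc A x)
  intro s
  rw [Finset.sum_indicator_eq_sum_filter]
  exact hC₀ _ x

lemma projL_finrank {A : Set ℕ} (hA : A.Finite) :
    FiniteDimensional ℂ (LinearMap.range (projL b f hunc A : X →ₗ[ℂ] X)) := by
  classical
  have hle : LinearMap.range (projL b f hunc A : X →ₗ[ℂ] X) ≤ Submodule.span ℂ (b '' A) := by
    rintro y ⟨x, rfl⟩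
    show projL b f hunc A x ∈ _
    rw [projL_apply]
    rw [tsum_eq_sum (s := hA.toFinset) (fun n hn => Set.indicator_of_notMem
      (by simpa using hn) _)]
    apply Submodule.sum_mem
    intro n hn
    have hnA : n ∈ A := by simpa using hn
    rw [Set.indicator_of_mem hnA]
    exact Submodule.smul_mem _ _ (Submodule.subset_span ⟨n, hnA, rfl⟩)
  have : FiniteDimensional ℂ (Submodule.span ℂ (b '' A)) :=
    FiniteDimensional.span_of_finite ℂ (hA.image b)
  exact Submodule.finiteDimensional_of_le hle


lemma summable_transfer {g h : ℕ → X} {K : ℝ}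
    (hK : ∀ t : Finset ℕ, ‖∑ n ∈ t, h n‖ ≤ K * ‖∑ n ∈ t, g n‖) (hg : Summable g) :
    Summable h := by
  rw [summable_iff_vanishing]
  intro e he
  obtain ⟨ε, hε, hball⟩ := Metric.mem_nhds_iff.mp he
  set K' := max K 1 with hK'def
  have hK' : (0:ℝ) < K' := lt_of_lt_of_le one_pos (le_max_right _ _)
  obtain ⟨s, hs⟩ := (summable_iff_vanishing.mp hg) (Metric.ball 0 (ε / K'))
    (Metric.ball_mem_nhds 0 (by positivity))
  refine ⟨s, fun t ht => hball ?_⟩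
  have h1 := hs t ht
  rw [Metric.mem_ball, dist_zero_right] at h1 ⊢
  have h2 : ‖∑ n ∈ t, h n‖ ≤ K' * ‖∑ n ∈ t, g n‖ :=
    le_trans (hK t) (mul_le_mul_of_nonneg_right (le_max_left _ _) (norm_nonneg _))
  calc ‖∑ n ∈ t, h n‖ ≤ K' * ‖∑ n ∈ t, g n‖ := h2
  _ < K' * (ε / K') := by exact mul_lt_mul_of_pos_left h1 hK'
  _ = ε := by field_simp

lemma range_iso (hbiorth : ∀ m n, f m (b n) = if m = n then 1 else 0)
    (hsubsym : ∀ σ : ℕ → ℕ, StrictMono σ →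
      ∃ c C : ℝ, 0 < c ∧
        ∀ (s : Finset ℕ) (a : ℕ → ℂ),
          c * ‖∑ n ∈ s, a n • b n‖ ≤ ‖∑ n ∈ s, a n • b (σ n)‖ ∧
          ‖∑ n ∈ s, a n • b (σ n)‖ ≤ C * ‖∑ n ∈ s, a n • b n‖)
    {A : Set ℕ} (hA : A.Infinite) :
    Nonempty ((LinearMap.range (projL b f hunc A : X →ₗ[ℂ] X)) ≃L[ℂ] X) := by
  classical
  set σ : ℕ → ℕ := Nat.nth (· ∈ A) with hσdef
  have hAset : {n | n ∈ A}.Infinite := hA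
  have hσmono : StrictMono σ := Nat.nth_strictMono hAset
  have hσinj : Function.Injective σ := hσmono.injective
  have hσrange : Set.range σ = A := Nat.range_nth_of_infinite hAset
  have hσmem : ∀ n, σ n ∈ A := fun n => hσrange ▸ ⟨n, rfl⟩
  obtain ⟨c, C, hc, hcC⟩ := hsubsym σ hσmono
  obtain ⟨C₀, hC₀0, hC₀⟩ := aux_uniform b f hunc
  -- summabilities
  have hTsum : ∀ x : X, Summable (fun n => f n x • b (σ n)) := fun x =>
    summable_transfer (fun t => (hcC t (fun n => f n x)).2) (hunc x).summable
  have hUsum0 : ∀ x : X, Summable (fun n => f (σ n) x • b (σ n)) := by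
    intro x
    apply ((summable_ind b f hunc A x).comp_injective hσinj).congr
    intro n
    simp only [Function.comp_apply, Set.indicator_of_mem (hσmem n)]
  have inv_trans : ∀ (a : ℕ → ℂ) (t : Finset ℕ),
      ‖∑ n ∈ t, a n • b n‖ ≤ c⁻¹ * ‖∑ n ∈ t, a n • b (σ n)‖ := by
    intro a t
    have h2 := (hcC t a).1
    calc ‖∑ n ∈ t, a n • b n‖ = c⁻¹ * (c * ‖∑ n ∈ t, a n • b n‖) := by field_simp
    _ ≤ c⁻¹ * ‖∑ n ∈ t, a n • b (σ n)‖ :=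
        mul_le_mul_of_nonneg_left h2 (by positivity)
  have hUsum : ∀ x : X, Summable (fun n => f (σ n) x • b n) := fun x =>
    summable_transfer (inv_trans (fun n => f (σ n) x)) (hUsum0 x)
  -- partial sum bounds
  have hTbound : ∀ (x : X) (t : Finset ℕ),
      ‖∑ n ∈ t, f n x • b (σ n)‖ ≤ (max C 0 * C₀) * ‖x‖ := by
    intro x t
    calc ‖∑ n ∈ t, f n x • b (σ n)‖ ≤ C * ‖∑ n ∈ t, f n x • b n‖ := (hcC t _).2
    _ ≤ max C 0 * ‖∑ n ∈ t, f n x • b n‖ :=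
        mul_le_mul_of_nonneg_right (le_max_left _ _) (norm_nonneg _)
    _ ≤ max C 0 * (C₀ * ‖x‖) :=
        mul_le_mul_of_nonneg_left (hC₀ t x) (le_max_right _ _)
    _ = (max C 0 * C₀) * ‖x‖ := by ring
  have hUbound : ∀ (x : X) (t : Finset ℕ),
      ‖∑ n ∈ t, f (σ n) x • b n‖ ≤ (c⁻¹ * C₀) * ‖x‖ := by
    intro x t
    have him : ∑ n ∈ t, f (σ n) x • b (σ n) = ∑ m ∈ t.image σ, f m x • b m := by
      rw [Finset.sum_image (fun n _ m _ h => hσinj h)]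
    calc ‖∑ n ∈ t, f (σ n) x • b n‖ ≤ c⁻¹ * ‖∑ n ∈ t, f (σ n) x • b (σ n)‖ := inv_trans _ t
    _ = c⁻¹ * ‖∑ m ∈ t.image σ, f m x • b m‖ := by rw [him]
    _ ≤ c⁻¹ * (C₀ * ‖x‖) := mul_le_mul_of_nonneg_left (hC₀ _ x) (by positivity)
    _ = (c⁻¹ * C₀) * ‖x‖ := by ring
  -- the two operators
  set T : X →L[ℂ] X := LinearMap.mkContinuousOfExistsBound
    { toFun := fun x => ∑' n, f n x • b (σ n)
      map_add' := by
        intro x y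
        rw [← Summable.tsum_add (hTsum x) (hTsum y)]
        exact tsum_congr fun n => by simp [map_add, add_smul]
      map_smul' := by
        intro k x
        rw [RingHom.id_apply, ← tsum_const_smul'' k]
        exact tsum_congr fun n => by simp [map_smul, smul_smul] }
    ⟨max C 0 * C₀, fun x => aux_tsum_norm_le (hTsum x) (hTbound x)⟩ with hTdef
  set U : X →L[ℂ] X := LinearMap.mkContinuousOfExistsBound
    { toFun := fun x => ∑' n, f (σ n) x • b n
      map_add' := by
        intro x y
        rw [← Summable.tsum_add (hUsum x) (hUsum y)]
        exact tsum_congr fun n => by simp [map_add, add_smul]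
      map_smul' := by
        intro k x
        rw [RingHom.id_apply, ← tsum_const_smul'' k]
        exact tsum_congr fun n => by simp [map_smul, smul_smul] }
    ⟨c⁻¹ * C₀, fun x => aux_tsum_norm_le (hUsum x) (hUbound x)⟩ with hUdef
  have hTapp : ∀ x : X, T x = ∑' n, f n x • b (σ n) := fun _ => rfl
  have hUapp : ∀ x : X, U x = ∑' n, f (σ n) x • b n := fun _ => rfl
  -- coefficient identities
  have hcoefT : ∀ (x : X) (m : ℕ), f (σ m) (T x) = f m x := by
    intro x m
    rw [hTapp, ContinuousLinearMap.map_tsum _ (hTsum x)]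
    have key : ∀ n, f (σ m) (f n x • b (σ n)) = if n = m then f m x else 0 := by
      intro n
      rw [map_smul, hbiorth (σ m) (σ n)]
      by_cases h : n = m
      · subst h; simp
      · have hne : σ m ≠ σ n := fun hh => h (hσinj hh).symm
        simp [h, hne]
    rw [tsum_congr key, tsum_ite_eq]
  have hcoefU : ∀ (x : X) (n : ℕ), f n (U x) = f (σ n) x := by
    intro x n
    rw [hUapp, ContinuousLinearMap.map_tsum _ (hUsum x)]
    have key : ∀ m, f n (f (σ m) x • b m) = if m = n then f (σ n) x else 0 := by
      intro m
      rw [map_smul, hbiorth n m]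
      by_cases h : m = n
      · subst h; simp
      · have hne : n ≠ m := Ne.symm h
        simp [h, hne]
    rw [tsum_congr key, tsum_ite_eq]
  have hUT : ∀ x : X, U (T x) = x := by
    intro x
    rw [hUapp]
    rw [tsum_congr (fun n => by rw [hcoefT x n] :
      ∀ n, f (σ n) (T x) • b n = f n x • b n)]
    exact (hunc x).tsum_eq
  have hTU : ∀ x : X, T (U x) = projL b f hunc A x := by
    intro x
    rw [hTapp]
    have h1 : ∀ n, f n (U x) • b (σ n) = (A.indicator fun k => f k x • b k) (σ n) := by
      intro n
      rw [hcoefU, Set.indicator_of_mem (hσmem n)]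
    rw [tsum_congr h1, hσinj.tsum_eq ?_, projL_apply]
    intro k hk
    rw [hσrange]
    by_contra hkA
    exact hk (Set.indicator_of_notMem hkA _)
  have hidem : ∀ z : X, projL b f hunc A (projL b f hunc A z) = projL b f hunc A z := by
    intro z
    have h := projL_comp b f hunc hbiorth A A
    rw [Set.inter_self] at h
    calc projL b f hunc A (projL b f hunc A z)
        = ((projL b f hunc A).comp (projL b f hunc A)) z := rfl
    _ = projL b f hunc A z := by rw [h]
  have hrange : ∀ x : X, T x ∈ LinearMap.range (projL b f hunc A : X →ₗ[ℂ] X) := by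
    intro x
    refine LinearMap.mem_range.mpr ⟨T x, ?_⟩
    show projL b f hunc A (T x) = T x
    rw [← hTU (T x), hUT x]
  refine ⟨ContinuousLinearEquiv.symm
    { toLinearEquiv :=
      { toFun := fun x => ⟨T x, hrange x⟩
        map_add' := fun x y => Subtype.ext (by simp only [map_add]; rfl)
        map_smul' := fun k x => Subtype.ext (by simp only [map_smul, RingHom.id_apply]; rfl)
        invFun := fun y => U y.1
        left_inv := fun x => hUT x
        right_inv := by
          rintro ⟨y, hy⟩
          obtain ⟨z, hz⟩ := LinearMap.mem_range.mp hy
          apply Subtype.ext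
          show T (U y) = y
          rw [hTU y, ← hz]
          exact hidem z }
      continuous_toFun := T.continuous.subtype_mk _
      continuous_invFun := U.continuous.comp continuous_subtype_val }⟩

end Proj

lemma exists_ad_family : ∃ A : ℝ → Set ℕ, (∀ r, (A r).Infinite) ∧
    ∀ r s : ℝ, r ≠ s → (A r ∩ A s).Finite := by
  classical
  have hex : ∀ (r : ℝ) (n : ℕ), ∃ q : ℚ, r - 1/(n+1) < (q:ℝ) ∧ (q:ℝ) < r - 1/(n+2) := by
    intro r n
    apply exists_rat_btwn
    have h : (1:ℝ)/(n+2) < 1/(n+1) := by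
      apply one_div_lt_one_div_of_lt <;> push_cast <;> linarith
    linarith
  choose q hq1 hq2 using hex
  have hmono : ∀ r : ℝ, StrictMono (fun n => (q r n : ℝ)) := by
    intro r
    apply strictMono_nat_of_lt_succ
    intro n
    have h1 : (q r n : ℝ) < r - 1/(n+2) := hq2 r n
    have h2 : r - 1/((n:ℝ)+1+1) < (q r (n+1) : ℝ) := by
      have := hq1 r (n+1)
      push_cast at this
      linarith
    have heq : r - 1/((n:ℝ)+2) = r - 1/((n:ℝ)+1+1) := by ring_nf
    calc (q r n : ℝ) < r - 1/((n:ℝ)+2) := h1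
    _ = r - 1/((n:ℝ)+1+1) := heq
    _ < _ := h2
  have hqinj : ∀ r : ℝ, Function.Injective (q r) := by
    intro r a a' h
    have := (hmono r).injective (congrArg (fun x : ℚ => (x:ℝ)) h)
    exact this
  refine ⟨fun r => Set.range (fun n => Encodable.encode (q r n)), ?_, ?_⟩
  · intro r
    exact Set.infinite_range_of_injective (fun a a' h =>
      hqinj r (Encodable.encode_injective h))
  · have key : ∀ r s : ℝ, r < s →
        (Set.range (fun n => Encodable.encode (q r n)) ∩
         Set.range (fun n => Encodable.encode (q s n))).Finite := by
      intro r s hrs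
      obtain ⟨N, hN⟩ := exists_nat_gt (1/(s - r))
      apply Set.Finite.subset (Set.Finite.image (fun m => Encodable.encode (q s m))
        (Set.finite_Iio N))
      rintro k ⟨⟨n, rfl⟩, ⟨m, hm⟩⟩
      refine ⟨m, ?_, hm⟩
      have hqq : q s m = q r n := Encodable.encode_injective hm
      have h1 : s - 1/(m+1) < (q s m : ℝ) := hq1 s m
      have h2 : (q r n : ℝ) < r - 1/(n+2) := hq2 r n
      have hlt : s - 1/((m:ℝ)+1) < r := by
        rw [hqq] at h1
        have : (1:ℝ)/(n+2) > 0 := by positivity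
        linarith
      have hsr : (0:ℝ) < s - r := by linarith
      have hm1 : (m:ℝ) + 1 < 1/(s-r) := by
        rw [lt_div_iff₀ hsr]
        have hmp : (0:ℝ) < (m:ℝ)+1 := by positivity
        have : s - r < 1/((m:ℝ)+1) := by linarith
        calc ((m:ℝ)+1) * (s-r) < ((m:ℝ)+1) * (1/((m:ℝ)+1)) :=
          mul_lt_mul_of_pos_left this hmp
        _ = 1 := by field_simp
      have : (m:ℝ) < N := by linarith
      exact_mod_cast this
    intro r s hrs
    rcases lt_or_gt_of_ne hrs with h | h
    · exact key r s h
    · rw [Set.inter_comm]; exact key s r h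

/-- If `X` is a Banach space with a subsymmetric Schauder basis, then `B(X)` admits a
uniformly bounded family of continuum many commuting, pairwise almost orthogonal
idempotents, each of whose ranges is isomorphic to `X`. -/
theorem exists_continuum_almost_orthogonal_idempotents
    {X : Type*} [NormedAddCommGroup X] [NormedSpace ℂ X] [CompleteSpace X]
    (b : ℕ → X) (f : ℕ → StrongDual ℂ X)
    (hbiorth : ∀ m n, f m (b n) = if m = n then 1 else 0)
    (hunc : ∀ x : X, HasSum (fun n => f n x • b n) x)
    (hsubsym : ∀ σ : ℕ → ℕ, StrictMono σ →
      ∃ c C : ℝ, 0 < c ∧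
        ∀ (s : Finset ℕ) (a : ℕ → ℂ),
          c * ‖∑ n ∈ s, a n • b n‖ ≤ ‖∑ n ∈ s, a n • b (σ n)‖ ∧
          ‖∑ n ∈ s, a n • b (σ n)‖ ≤ C * ‖∑ n ∈ s, a n • b n‖) :
    ∃ Q : Set (X →L[ℂ] X),
      Cardinal.mk Q = Cardinal.continuum ∧
      (∃ C : ℝ, ∀ P ∈ Q, ‖P‖ ≤ C) ∧
      (∀ P ∈ Q, IsIdempotentElem P) ∧
      (∀ P ∈ Q, ∀ R ∈ Q, P * R = R * P) ∧
      (∀ P ∈ Q, ∀ R ∈ Q, P ≠ R →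
        FiniteDimensional ℂ (LinearMap.range ((P * R : X →L[ℂ] X) : X →ₗ[ℂ] X)) ∧
        FiniteDimensional ℂ (LinearMap.range ((R * P : X →L[ℂ] X) : X →ₗ[ℂ] X))) ∧
      (∀ P ∈ Q, Nonempty ((LinearMap.range (P : X →ₗ[ℂ] X)) ≃L[ℂ] X)) := by
  classical
  obtain ⟨A, hinf, hfin⟩ := exists_ad_family
  obtain ⟨C₀, hC₀0, hC₀⟩ := aux_uniform b f hunc
  set g : ℝ → (X →L[ℂ] X) := fun r => projL b f hunc (A r) with hgdef
  have hAne : ∀ r s : ℝ, r ≠ s → A r ≠ A s := by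
    intro r s hrs h
    have hf := hfin r s hrs
    rw [h, Set.inter_self] at hf
    exact hinf s hf
  have hginj : Function.Injective g := by
    intro r s h
    by_contra hrs
    exact hAne r s hrs (projL_inj b f hunc hbiorth h)
  have hmul : ∀ r s : ℝ, g r * g s = projL b f hunc (A r ∩ A s) := by
    intro r s
    rw [ContinuousLinearMap.mul_def]
    exact projL_comp b f hunc hbiorth (A r) (A s)
  refine ⟨Set.range g, ?_, ⟨C₀, ?_⟩, ?_, ?_, ?_, ?_⟩
  · have h := Cardinal.mk_range_eq_of_injective hginj
    rw [Cardinal.mk_real, Cardinal.lift_continuum] at h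
    simpa using h
  · rintro P ⟨r, rfl⟩
    exact projL_norm_le b f hunc hC₀0 hC₀ (A r)
  · rintro P ⟨r, rfl⟩
    show g r * g r = g r
    rw [hmul, Set.inter_self]
  · rintro P ⟨r, rfl⟩ R ⟨s, rfl⟩
    rw [hmul, hmul, Set.inter_comm]
  · rintro P ⟨r, rfl⟩ R ⟨s, rfl⟩ hne
    have hrs : r ≠ s := fun h => hne (by rw [h])
    constructor
    · rw [hmul]
      exact projL_finrank b f hunc (hfin r s hrs)
    · rw [hmul]
      exact projL_finrank b f hunc (hfin s r hrs.symm)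
  · rintro P ⟨r, rfl⟩
    exact range_iso b f hunc hbiorth hsubsym (hinf r)
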